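/- For Re(s) > 2, ζ(s-1)/ζ(s) = ∏_{n=1}^∞ ∏_{χ mod n} L'(χ, s), where the inner product runs over all Dirichlet characters χ modulo n, and L'(χ, s) = ∏_{p ∤ n} (1 - χ(p) p^{-s})^{-1} is the Dirichlet L-function of χ with Euler factors at primes dividing n removed (i.e. the L-function of the possibly imprimitive character mod n). -/

import Mathlib

open Complex

namespace Stmt12Aux

lemma primePow_inj : Function.Injective (fun pk : Nat.Primes × ℕ ↦ (pk.1 : ℕ) ^ (pk.2 + 1)) := by
  rintro ⟨p, k⟩ ⟨r, l⟩ h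
  simp only at h
  have hpr : (p : ℕ) = (r : ℕ) := by
    have h1 : (p : ℕ) ∣ (r : ℕ) ^ (l + 1) := h ▸ dvd_pow_self _ (Nat.succ_ne_zero k)
    exact (Nat.prime_dvd_prime_iff_eq p.2 r.2).mp (p.2.dvd_of_dvd_pow h1)
  have hkl : k + 1 = l + 1 := Nat.pow_right_injective p.2.two_le (by rw [hpr] at h ⊢; exact h)
  exact Prod.ext (Subtype.ext hpr) (by omega)

lemma summable_primePow_rpow {r : ℝ} (hr : 1 < r) :
    Summable (fun pk : Nat.Primes × ℕ ↦ (((pk.1 : ℕ) ^ (pk.2 + 1) : ℕ) : ℝ) ^ (-r)) :=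
  (Real.summable_nat_rpow.mpr (by linarith)).comp_injective primePow_inj

lemma key_iff (q n : ℕ) (hq : 2 ≤ q) : ((q : ZMod (n + 1)) = 1) ↔ (n + 1) ∣ q - 1 := by
  rw [show (1 : ZMod (n + 1)) = ((1 : ℕ) : ZMod (n + 1)) by simp, ZMod.natCast_eq_natCast_iff]
  constructor
  · exact fun h => (Nat.modEq_iff_dvd' (by omega)).mp h.symm
  · exact fun h => ((Nat.modEq_iff_dvd' (by omega)).mpr h).symm

lemma hasSum_totient_ind {q : ℕ} (hq : 2 ≤ q) :
    HasSum (fun n : ℕ ↦ if ((q : ZMod (n + 1)) = 1) then ((n + 1).totient : ℝ) else 0)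
      ((q - 1 : ℕ) : ℝ) := by
  have h0 : ∀ n ∉ (q - 1).divisors.image (· - 1),
      (if ((q : ZMod (n + 1)) = 1) then ((n + 1).totient : ℝ) else 0) = 0 := by
    intro n hn
    rw [if_neg]
    intro h
    exact hn <| Finset.mem_image.mpr ⟨n + 1,
      Nat.mem_divisors.mpr ⟨(key_iff q n hq).mp h, by omega⟩, by omega⟩
  have h := hasSum_sum_of_ne_finset_zero (L := SummationFilter.unconditional ℕ) h0
  have he : ∑ n ∈ (q - 1).divisors.image (· - 1),
      (if ((q : ZMod (n + 1)) = 1) then ((n + 1).totient : ℝ) else 0) = ((q - 1 : ℕ) : ℝ) := by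
    rw [Finset.sum_image (by
      intro a ha b hb hab
      have ha' := Nat.pos_of_mem_divisors ha
      have hb' := Nat.pos_of_mem_divisors hb
      simp only at hab
      omega)]
    rw [show ((q - 1 : ℕ) : ℝ) = ∑ d ∈ (q - 1).divisors, (d.totient : ℝ) by
      rw [← Nat.cast_sum]
      exact_mod_cast congrArg (Nat.cast (R := ℝ)) (Nat.sum_totient (q - 1)).symm]
    refine Finset.sum_congr rfl fun d hd => ?_
    have hd1 : 1 ≤ d := Nat.pos_of_mem_divisors hd
    have hd' : d - 1 + 1 = d := by omega
    have hcond : ((q : ZMod (d - 1 + 1)) = 1) :=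
      (key_iff q (d - 1) hq).mpr (by rw [hd']; exact (Nat.mem_divisors.mp hd).1)
    rw [if_pos hcond, hd']
  rwa [he] at h

noncomputable def v (s : ℂ) (p : Nat.Primes) : ℂ := ((p : ℕ) : ℂ) ^ (-s)

def Q (pk : Nat.Primes × ℕ) : ℕ := (pk.1 : ℕ) ^ (pk.2 + 1)

noncomputable def w (s : ℂ) (pk : Nat.Primes × ℕ) : ℂ :=
  v s pk.1 ^ (pk.2 + 1) / ((pk.2 + 1 : ℕ) : ℂ)

noncomputable def cterm (s : ℂ) (n : ℕ) (pk : Nat.Primes × ℕ) : ℂ :=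
  ((if ((Q pk : ZMod (n + 1)) = 1) then ((n + 1).totient : ℝ) else 0 : ℝ) : ℂ) * w s pk

lemma two_le_Q (pk : Nat.Primes × ℕ) : 2 ≤ Q pk :=
  le_trans pk.1.2.two_le (Nat.le_self_pow (Nat.succ_ne_zero _) _)

lemma Q_pos (pk : Nat.Primes × ℕ) : 0 < Q pk := lt_of_lt_of_le two_pos (two_le_Q pk)

lemma norm_v (s : ℂ) (p : Nat.Primes) : ‖v s p‖ = ((p : ℕ) : ℝ) ^ (-s.re) := by
  rw [v, norm_natCast_cpow_of_pos p.2.pos, neg_re]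

lemma norm_v_lt_one {s : ℂ} (hs : 0 < s.re) (p : Nat.Primes) : ‖v s p‖ < 1 := by
  rw [norm_v]
  exact Real.rpow_lt_one_of_one_lt_of_neg (by exact_mod_cast p.2.one_lt) (by linarith)

lemma norm_v_pow (s : ℂ) (pk : Nat.Primes × ℕ) :
    ‖v s pk.1 ^ (pk.2 + 1)‖ = ((Q pk : ℕ) : ℝ) ^ (-s.re) := by
  rw [norm_pow, norm_v, Q]
  rw [← Real.rpow_natCast (((pk.1 : ℕ) : ℝ) ^ (-s.re)) (pk.2 + 1),
    ← Real.rpow_mul (by positivity)]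
  rw [show (((pk.1 : ℕ) ^ (pk.2 + 1) : ℕ) : ℝ) = ((pk.1 : ℕ) : ℝ) ^ ((pk.2 + 1 : ℕ) : ℝ) by
    rw [Real.rpow_natCast]; push_cast; ring]
  rw [← Real.rpow_mul (by positivity)]
  ring_nf

lemma norm_w_le (s : ℂ) (pk : Nat.Primes × ℕ) : ‖w s pk‖ ≤ ((Q pk : ℕ) : ℝ) ^ (-s.re) := by
  rw [w, norm_div, ← norm_v_pow s pk]
  exact div_le_self (norm_nonneg _)
    (by rw [norm_natCast]; exact_mod_cast Nat.succ_le_succ (Nat.zero_le _))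

lemma norm_cterm (s : ℂ) (n : ℕ) (pk : Nat.Primes × ℕ) :
    ‖cterm s n pk‖ =
      (if ((Q pk : ZMod (n + 1)) = 1) then ((n + 1).totient : ℝ) else 0) * ‖w s pk‖ := by
  rw [cterm, norm_mul, Complex.norm_real, Real.norm_eq_abs, _root_.abs_of_nonneg (by positivity)]

lemma hasSum_norm_cterm (s : ℂ) (pk : Nat.Primes × ℕ) :
    HasSum (fun n ↦ ‖cterm s n pk‖) (((Q pk - 1 : ℕ) : ℝ) * ‖w s pk‖) := by
  have h := (hasSum_totient_ind (two_le_Q pk)).mul_right ‖w s pk‖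
  exact h.congr_fun fun n ↦ norm_cterm s n pk

lemma hasSum_cterm (s : ℂ) (pk : Nat.Primes × ℕ) :
    HasSum (fun n ↦ cterm s n pk) (((Q pk - 1 : ℕ) : ℂ) * w s pk) := by
  have h := (Complex.hasSum_ofReal.mpr (hasSum_totient_ind (two_le_Q pk))).mul_right (w s pk)
  rw [Complex.ofReal_natCast] at h
  exact h.congr_fun fun n ↦ by rw [cterm]

lemma hasSum_pow_div {z : ℂ} (hz : ‖z‖ < 1) :
    HasSum (fun k : ℕ ↦ z ^ (k + 1) / ((k + 1 : ℕ) : ℂ)) (-log (1 - z)) := by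
  have h := (hasSum_nat_add_iff' (f := fun n : ℕ ↦ z ^ n / (n : ℂ)) 1).mpr
    (hasSum_taylorSeries_neg_log hz)
  simpa using h

lemma summable_Q_rpow {r : ℝ} (hr : 1 < r) :
    Summable (fun pk : Nat.Primes × ℕ ↦ ((Q pk : ℕ) : ℝ) ^ (-r)) :=
  summable_primePow_rpow hr

lemma summable_w {s : ℂ} (hs : 1 < s.re) : Summable (w s) :=
  Summable.of_norm_bounded (summable_Q_rpow hs) (norm_w_le s)

lemma summable_v {z : ℂ} (hz : 1 < z.re) : Summable (fun p : Nat.Primes ↦ v z p) := by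
  apply Summable.of_norm
  simp only [norm_v]
  exact (Real.summable_nat_rpow.mpr (by linarith)).comp_injective fun a b h ↦ Subtype.ext h

lemma summable_norm_cterm {s : ℂ} (hs : 2 < s.re) :
    Summable (fun x : (Nat.Primes × ℕ) × ℕ ↦ ‖cterm s x.2 x.1‖) := by
  rw [summable_prod_of_nonneg (fun x ↦ norm_nonneg _)]
  refine ⟨fun pk ↦ (hasSum_norm_cterm s pk).summable, ?_⟩
  refine Summable.of_nonneg_of_le (fun pk ↦ tsum_nonneg fun n ↦ norm_nonneg _)
    (fun pk ↦ ?_) (summable_Q_rpow (r := s.re - 1) (by linarith))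
  rw [(hasSum_norm_cterm s pk).tsum_eq]
  calc ((Q pk - 1 : ℕ) : ℝ) * ‖w s pk‖ ≤ ((Q pk : ℕ) : ℝ) * ((Q pk : ℕ) : ℝ) ^ (-s.re) := by
        apply mul_le_mul ?_ (norm_w_le s pk) (norm_nonneg _) (by positivity)
        exact_mod_cast Nat.sub_le _ _
    _ = ((Q pk : ℕ) : ℝ) ^ (-(s.re - 1)) := by
        rw [show -(s.re - 1) = 1 + (-s.re) by ring,
          Real.rpow_add (by exact_mod_cast Q_pos pk), Real.rpow_one]

lemma summable_cterm {s : ℂ} (hs : 2 < s.re) :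
    Summable (fun x : ℕ × (Nat.Primes × ℕ) ↦ cterm s x.1 x.2) :=
  Summable.of_norm (summable_norm_cterm hs).prod_symm

lemma summable_tsum_norm {s : ℂ} (hs : 2 < s.re) :
    Summable (fun n : ℕ ↦ ∑' pk : Nat.Primes × ℕ, ‖cterm s n pk‖) :=
  ((summable_prod_of_nonneg (fun x ↦ norm_nonneg _)).mp (summable_norm_cterm hs).prod_symm).2

noncomputable def dterm (s : ℂ) (n : ℕ) (χ : DirichletCharacter ℂ (n + 1))
    (pk : Nat.Primes × ℕ) : ℂ :=
  (χ ((pk.1 : ℕ) : ZMod (n + 1)) * v s pk.1) ^ (pk.2 + 1) / ((pk.2 + 1 : ℕ) : ℂ)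

lemma norm_dterm_le (s : ℂ) (n : ℕ) (χ : DirichletCharacter ℂ (n + 1)) (pk : Nat.Primes × ℕ) :
    ‖dterm s n χ pk‖ ≤ ((Q pk : ℕ) : ℝ) ^ (-s.re) := by
  rw [dterm, norm_div]
  calc ‖(χ ((pk.1 : ℕ) : ZMod (n + 1)) * v s pk.1) ^ (pk.2 + 1)‖ / ‖((pk.2 + 1 : ℕ) : ℂ)‖
      ≤ ‖(χ ((pk.1 : ℕ) : ZMod (n + 1)) * v s pk.1) ^ (pk.2 + 1)‖ :=
        div_le_self (norm_nonneg _)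
          (by rw [norm_natCast]; exact_mod_cast Nat.succ_le_succ (Nat.zero_le _))
    _ ≤ ‖v s pk.1 ^ (pk.2 + 1)‖ := by
        rw [norm_pow, norm_pow, norm_mul]
        exact pow_le_pow_left₀ (by positivity)
          (mul_le_of_le_one_left (norm_nonneg _) (χ.norm_le_one _)) _
    _ = _ := norm_v_pow s pk

lemma summable_dterm {s : ℂ} (hs : 1 < s.re) (n : ℕ) (χ : DirichletCharacter ℂ (n + 1)) :
    Summable (dterm s n χ) :=
  Summable.of_norm_bounded (summable_Q_rpow hs) (norm_dterm_le s n χ)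

lemma sum_dterm (s : ℂ) (n : ℕ) (pk : Nat.Primes × ℕ) :
    ∑ χ : DirichletCharacter ℂ (n + 1), dterm s n χ pk = cterm s n pk := by
  have h1 : ∀ χ : DirichletCharacter ℂ (n + 1),
      dterm s n χ pk = χ ((Q pk : ℕ) : ZMod (n + 1)) * w s pk := by
    intro χ
    rw [dterm, w, mul_pow, Q]
    rw [show (((pk.1 : ℕ) ^ (pk.2 + 1) : ℕ) : ZMod (n + 1))
        = (((pk.1 : ℕ) : ZMod (n + 1))) ^ (pk.2 + 1) by push_cast; ring]
    rw [map_pow]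
    ring
  simp only [h1, ← Finset.sum_mul]
  rw [DirichletCharacter.sum_characters_eq, cterm, apply_ite (Complex.ofReal)]
  norm_num

end Stmt12Aux

open Stmt12Aux in
/-- For `Re s > 2`, `ζ(s-1)/ζ(s) = ∏_{n ≥ 1} ∏_{χ mod n} L'(χ, s)`, where the inner (finite)
product runs over all Dirichlet characters `χ` modulo `n` and
`L'(χ, s) = ∏_p (1 - χ(p) p^{-s})⁻¹` is the Dirichlet `L`-function of the (possibly
imprimitive) character `χ` mod `n`; note `χ(p) = 0` for `p ∣ n`, so the Euler factors at
primes dividing `n` are automatically removed. -/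
theorem stmt_12 (s : ℂ) (hs : 2 < s.re) :
    riemannZeta (s - 1) / riemannZeta s =
      ∏' n : ℕ,
        ∏ χ : DirichletCharacter ℂ (n + 1),
          ∏' p : Nat.Primes, (1 - χ ((p : ℕ) : ZMod (n + 1)) * ((p : ℕ) : ℂ) ^ (-s))⁻¹ := by
  have hs1 : 1 < s.re := by linarith
  have hs1' : 1 < (s - 1).re := by
    simp only [Complex.sub_re, Complex.one_re]; linarith
  set a : ℕ → ℂ := fun n ↦ ∑' pk : Nat.Primes × ℕ, cterm s n pk with ha_def
  -- Step 1: the inner double product equals `cexp (a n)`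
  have hF : ∀ n : ℕ,
      (∏ χ : DirichletCharacter ℂ (n + 1),
        ∏' p : Nat.Primes, (1 - χ ((p : ℕ) : ZMod (n + 1)) * ((p : ℕ) : ℂ) ^ (-s))⁻¹)
        = cexp (a n) := by
    intro n
    have hz : ∀ (χ : DirichletCharacter ℂ (n + 1)) (p : Nat.Primes),
        ‖χ ((p : ℕ) : ZMod (n + 1)) * v s p‖ < 1 := fun χ p ↦
      lt_of_le_of_lt
        (by rw [norm_mul]; exact mul_le_of_le_one_left (norm_nonneg _) (χ.norm_le_one _))
        (norm_v_lt_one (by linarith) p)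
    have hχeq : ∀ χ : DirichletCharacter ℂ (n + 1),
        (∏' p : Nat.Primes, (1 - χ ((p : ℕ) : ZMod (n + 1)) * ((p : ℕ) : ℂ) ^ (-s))⁻¹)
          = cexp (∑' p : Nat.Primes, -log (1 - χ ((p : ℕ) : ZMod (n + 1)) * v s p)) := by
      intro χ
      exact (DirichletCharacter.LSeries_eulerProduct_tprod χ hs1).trans
        (DirichletCharacter.LSeries_eulerProduct_exp_log χ hs1).symm
    rw [Finset.prod_congr rfl (fun χ _ ↦ hχeq χ), ← Complex.exp_sum]
    congr 1
    calc ∑ χ : DirichletCharacter ℂ (n + 1),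
          ∑' p : Nat.Primes, -log (1 - χ ((p : ℕ) : ZMod (n + 1)) * v s p)
        = ∑ χ : DirichletCharacter ℂ (n + 1), ∑' pk : Nat.Primes × ℕ, dterm s n χ pk := by
          refine Finset.sum_congr rfl fun χ _ ↦ ?_
          rw [Summable.tsum_prod (summable_dterm hs1 n χ)]
          exact tsum_congr fun p ↦ ((hasSum_pow_div (hz χ p)).tsum_eq).symm
      _ = ∑' pk : Nat.Primes × ℕ, ∑ χ : DirichletCharacter ℂ (n + 1), dterm s n χ pk :=
          (Summable.tsum_finsetSum (fun χ _ ↦ summable_dterm hs1 n χ)).symm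
      _ = a n := tsum_congr fun pk ↦ sum_dterm s n pk
  -- Step 2: summability of `a`
  have ha : Summable a := by
    refine Summable.of_norm_bounded (summable_tsum_norm hs) fun n ↦ ?_
    exact norm_tsum_le_tsum_norm ((summable_norm_cterm hs).prod_symm.prod_factor n)
  -- Step 3: the sum of `a`
  have key : ∑' n : ℕ, a n =
      (∑' p : Nat.Primes, -log (1 - v (s - 1) p)) - ∑' p : Nat.Primes, -log (1 - v s p) := by
    have hcomm := Summable.tsum_comm (f := fun (n : ℕ) (pk : Nat.Primes × ℕ) ↦ cterm s n pk)
      (summable_cterm hs)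
    calc ∑' n : ℕ, a n = ∑' pk : Nat.Primes × ℕ, ∑' n : ℕ, cterm s n pk := hcomm.symm
      _ = ∑' pk : Nat.Primes × ℕ, (w (s - 1) pk - w s pk) := by
          refine tsum_congr fun pk ↦ ?_
          rw [(hasSum_cterm s pk).tsum_eq]
          have hQ1 : (1 : ℕ) ≤ Q pk := le_trans one_le_two (two_le_Q pk)
          rw [Nat.cast_sub hQ1, Nat.cast_one, sub_mul, one_mul]
          have hv : ((pk.1 : ℕ) : ℂ) * v s pk.1 = v (s - 1) pk.1 := by
            rw [v, v, show -(s - 1) = 1 + (-s) by ring,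
              cpow_add _ _ (by exact_mod_cast pk.1.2.pos.ne'), cpow_one]
          have hQw : (Q pk : ℂ) * w s pk = w (s - 1) pk := by
            rw [w, w, Q, ← hv, mul_pow]
            push_cast
            ring
          rw [hQw]
      _ = ∑' p : Nat.Primes, ∑' k : ℕ, (w (s - 1) (p, k) - w s (p, k)) :=
          Summable.tsum_prod ((summable_w hs1').sub (summable_w hs1))
      _ = ∑' p : Nat.Primes, (-log (1 - v (s - 1) p) - -log (1 - v s p)) := by
          refine tsum_congr fun p ↦ ?_
          exact ((hasSum_pow_div (norm_v_lt_one (by linarith) p)).sub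
            (hasSum_pow_div (norm_v_lt_one (by linarith) p))).tsum_eq
      _ = _ := Summable.tsum_sub ((summable_v hs1').clog_one_sub.neg) ((summable_v hs1).clog_one_sub.neg)
  -- Step 4: assemble
  calc riemannZeta (s - 1) / riemannZeta s
      = cexp ((∑' p : Nat.Primes, -log (1 - v (s - 1) p))
          - ∑' p : Nat.Primes, -log (1 - v s p)) := by
        rw [Complex.exp_sub]
        congr 1
        · rw [← riemannZeta_eulerProduct_exp_log hs1']
          simp only [v]
        · rw [← riemannZeta_eulerProduct_exp_log hs1]
          simp only [v]
    _ = cexp (∑' n : ℕ, a n) := by rw [key]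
    _ = ∏' n : ℕ, cexp (a n) := (ha.hasSum.cexp.tprod_eq).symm
    _ = _ := (tprod_congr hF).symm
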